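/- Let h: ℕ→ℕ be a strictly increasing function, α < ε₀ an ordinal, and n > 0. If ⟨α₀,n₀⟩, ⟨α₁,n₁⟩, …, ⟨α_ℓ,n_ℓ⟩ is a Hardy computation for h^α(n), then for all 0 ≤ i ≤ ℓ, the size of the term denoting α_i is bounded by |α_i| ≤ G_α(n_ℓ). -/

import Mathlib

open ONote Ordinal

/-- The slow-growing hierarchy `G_α`: `G_0(x) = 0`, `G_{α+1}(x) = 1 + G_α(x)`,
`G_λ(x) = G_{λ(x)}(x)`. -/
def SlowG : ONote → ℕ → ℕ
  | o =>
    match fundamentalSequence o, fundamentalSequence_has_prop o with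
    | Sum.inl none, _ => fun _ => 0
    | Sum.inl (some a), hp =>
      have : a < o := by rw [lt_def, hp.1]; exact Order.lt_succ _
      fun x => 1 + SlowG a x
    | Sum.inr f, hp => fun x =>
      have : f x < o := (hp.2.1 x).2.1
      SlowG (f x) x
  termination_by o => o

/-- The predecessor `P_x(α)` of an ordinal `α > 0` at `x`: `P_x(α+1) = α`,
`P_x(λ) = P_x(λ(x))`. -/
def opred (x : ℕ) : ONote → ONote
  | o =>
    match fundamentalSequence o, fundamentalSequence_has_prop o with
    | Sum.inl none, _ => 0
    | Sum.inl (some a), _ => a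
    | Sum.inr f, hp =>
      have : f x < o := (hp.2.1 x).2.1
      opred x (f x)
  termination_by o => o

/-- The size `|α|` of the term denoting `α`: `|0| = 0`, `|ω^α| = 1 + |α|`,
`|α + α'| = |α| + |α'|`. -/
def osize : ONote → ℕ
  | ONote.zero => 0
  | ONote.oadd e n a => (n : ℕ) * (1 + osize e) + osize a

-- Auxiliary development

def oeval : ONote → ℕ → ℕ
  | ONote.zero, _ => 0
  | ONote.oadd e n a, x => (n : ℕ) * (x + 1) ^ oeval e x + oeval a x

theorem oeval_pos (o : ONote) (ho : o ≠ 0) (x : ℕ) : 0 < oeval o x := by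
  cases o with
  | zero => exact absurd rfl ho
  | oadd e n a =>
    simp only [oeval]
    positivity

theorem oeval_mono (o : ONote) {x y : ℕ} (hxy : x ≤ y) : oeval o x ≤ oeval o y := by
  induction o with
  | zero => exact le_refl _
  | oadd e n a ihe iha =>
    simp only [oeval]
    gcongr <;> omega

theorem osize_le_oeval (o : ONote) {x : ℕ} (hx : 1 ≤ x) : osize o ≤ oeval o x := by
  induction o with
  | zero => exact le_refl _
  | oadd e n a ihe iha =>
    simp only [osize, oeval]
    have h1 : 1 + osize e ≤ (x + 1) ^ oeval e x := by
      calc 1 + osize e ≤ 1 + oeval e x := by omega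
        _ ≤ 2 ^ oeval e x := by
              have := @Nat.lt_two_pow_self (oeval e x); omega
        _ ≤ (x + 1) ^ oeval e x := Nat.pow_le_pow_left (by omega) _
    calc (n : ℕ) * (1 + osize e) + osize a ≤ (n : ℕ) * ((x+1) ^ oeval e x) + oeval a x := by
          gcongr
      _ = _ := rfl

theorem oeval_fs (o : ONote) (x : ℕ) :
    (∀ a, fundamentalSequence o = Sum.inl (some a) → oeval o x = oeval a x + 1) ∧
    (∀ f, fundamentalSequence o = Sum.inr f → oeval (f x) x = oeval o x) := by
  induction o with
  | zero => simp [fundamentalSequence]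
  | oadd a m b iha ihb =>
    rcases hb : fundamentalSequence b with (_|b') | f
    · -- b = 0
      have hb0 : b = 0 := by
        have := fundamentalSequence_has_prop b
        rw [hb] at this
        exact this
      subst hb0
      rcases ha : fundamentalSequence a with (_|a') | fa
      · have ha0 : a = 0 := by
          have := fundamentalSequence_has_prop a
          rw [ha] at this
          exact this
        subst ha0
        rcases hm : m.natPred with _ | m'
        · have hm1 : (m : ℕ) = 1 := by
            have := PNat.natPred_add_one m
            omega
          constructor
          · intro c hc
            simp only [fundamentalSequence, hb, ha, hm] at hc
            cases hc
            simp [oeval, hm1]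
          · intro f hf
            simp only [fundamentalSequence, hb, ha, hm] at hf
            cases hf
        · have hm1 : (m : ℕ) = m' + 2 := by
            have := PNat.natPred_add_one m
            omega
          constructor
          · intro c hc
            simp only [fundamentalSequence, hb, ha, hm] at hc
            cases hc
            simp [oeval, hm1, Nat.succPNat]
          · intro f hf
            simp only [fundamentalSequence, hb, ha, hm] at hf
            cases hf
      · have hsucc : oeval a x = oeval a' x + 1 := (iha).1 a' ha
        rcases hm : m.natPred with _ | m'
        · have hm1 : (m : ℕ) = 1 := by
            have := PNat.natPred_add_one m
            omega
          constructor
          · intro c hc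
            simp only [fundamentalSequence, hb, ha, hm] at hc
            cases hc
          · intro f hf
            simp only [fundamentalSequence, hb, ha, hm] at hf
            cases hf
            simp [oeval, hm1, Nat.succPNat, hsucc, pow_succ]
            ring
        · have hm1 : (m : ℕ) = m' + 2 := by
            have := PNat.natPred_add_one m
            omega
          constructor
          · intro c hc
            simp only [fundamentalSequence, hb, ha, hm] at hc
            cases hc
          · intro f hf
            simp only [fundamentalSequence, hb, ha, hm] at hf
            cases hf
            simp [oeval, hm1, Nat.succPNat, hsucc, pow_succ]
            ring
      · have hlim : oeval (fa x) x = oeval a x := (iha).2 fa ha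
        rcases hm : m.natPred with _ | m'
        · have hm1 : (m : ℕ) = 1 := by
            have := PNat.natPred_add_one m
            omega
          constructor
          · intro c hc
            simp only [fundamentalSequence, hb, ha, hm] at hc
            cases hc
          · intro f hf
            simp only [fundamentalSequence, hb, ha, hm] at hf
            cases hf
            simp [oeval, hm1, hlim]
        · have hm1 : (m : ℕ) = m' + 2 := by
            have := PNat.natPred_add_one m
            omega
          constructor
          · intro c hc
            simp only [fundamentalSequence, hb, ha, hm] at hc
            cases hc
          · intro f hf
            simp only [fundamentalSequence, hb, ha, hm] at hf
            cases hf
            simp [oeval, hm1, Nat.succPNat, hlim]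
            ring
    · constructor
      · intro c hc
        simp only [fundamentalSequence, hb] at hc
        cases hc
        have := (ihb).1 b' hb
        simp [oeval, this]
        ring
      · intro f hf
        simp only [fundamentalSequence, hb] at hf
        cases hf
    · constructor
      · intro c hc
        simp only [fundamentalSequence, hb] at hc
        cases hc
      · intro f hf
        simp only [fundamentalSequence, hb] at hf
        cases hf
        have := (ihb).2 f hb
        simp [oeval, this]

theorem oeval_fs_mono (o : ONote) :
    ∀ f, fundamentalSequence o = Sum.inr f → ∀ i t, oeval (f i) t ≤ oeval (f (i + 1)) t := by
  induction o with
  | zero => intro f hf; simp [fundamentalSequence] at hf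
  | oadd a m b iha ihb =>
    intro f hf i t
    rcases hb : fundamentalSequence b with (_|b') | fb
    · rcases ha : fundamentalSequence a with (_|a') | fa
      · rcases hm : m.natPred with _ | m' <;>
          · simp only [fundamentalSequence, hb, ha, hm] at hf
            cases hf
      · rcases hm : m.natPred with _ | m'
        · simp only [fundamentalSequence, hb, ha, hm] at hf
          cases hf
          simp only [oeval, Nat.succPNat]
          gcongr <;> simp
        · simp only [fundamentalSequence, hb, ha, hm] at hf
          cases hf
          simp only [oeval, Nat.succPNat]
          gcongr <;> simp
      · rcases hm : m.natPred with _ | m'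
        · simp only [fundamentalSequence, hb, ha, hm] at hf
          cases hf
          simp only [oeval, PNat.one_coe, one_mul, add_zero]
          have := iha fa ha i t
          gcongr
          omega
        · simp only [fundamentalSequence, hb, ha, hm] at hf
          cases hf
          simp only [oeval, PNat.one_coe, one_mul, add_zero]
          have := iha fa ha i t
          gcongr
          omega
    · simp only [fundamentalSequence, hb] at hf
      cases hf
    · simp only [fundamentalSequence, hb] at hf
      cases hf
      simp only [oeval]
      have := ihb fb hb i t
      gcongr

theorem oeval_fs_mono' (o : ONote) {f : ℕ → ONote} (hf : fundamentalSequence o = Sum.inr f)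
    {i j : ℕ} (hij : i ≤ j) (t : ℕ) : oeval (f i) t ≤ oeval (f j) t := by
  induction j with
  | zero => cases Nat.le_zero.mp hij; exact le_refl _
  | succ j ihj =>
    rcases Nat.lt_or_ge i (j+1) with h | h
    · exact le_trans (ihj (by omega)) (oeval_fs_mono o f hf j t)
    · have : i = j + 1 := by omega
      subst this; exact le_refl _

theorem SlowG_none {o : ONote} (h : fundamentalSequence o = Sum.inl none) (x : ℕ) :
    SlowG o x = 0 := by
  rw [SlowG]; generalize_proofs hp; revert hp; rw [h]; intro hp; rfl

theorem SlowG_some {o a : ONote} (h : fundamentalSequence o = Sum.inl (some a)) (x : ℕ) :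
    SlowG o x = 1 + SlowG a x := by
  rw [SlowG]; generalize_proofs hp; revert hp; rw [h]; intro hp; rfl

theorem SlowG_lim {o : ONote} {f : ℕ → ONote} (h : fundamentalSequence o = Sum.inr f) (x : ℕ) :
    SlowG o x = SlowG (f x) x := by
  rw [SlowG]; generalize_proofs hp; revert hp; rw [h]; intro hp; rfl

theorem opred_none {o : ONote} (h : fundamentalSequence o = Sum.inl none) (x : ℕ) :
    opred x o = 0 := by
  rw [opred]; generalize_proofs hp; revert hp; rw [h]; intro hp; rfl

theorem opred_some {o a : ONote} (h : fundamentalSequence o = Sum.inl (some a)) (x : ℕ) :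
    opred x o = a := by
  rw [opred]; generalize_proofs hp; revert hp; rw [h]; intro hp; rfl

theorem opred_lim {o : ONote} {f : ℕ → ONote} (h : fundamentalSequence o = Sum.inr f) (x : ℕ) :
    opred x o = opred x (f x) := by
  rw [opred]; generalize_proofs hp; revert hp; rw [h]; intro hp; rfl

theorem slowG_eq_oeval (o : ONote) : ∀ x, SlowG o x = oeval o x := by
  induction o using SlowG.induct with
  | case1 o _ hp h =>
    intro x
    rw [SlowG_none h]
    have : o = 0 := hp
    subst this
    rfl
  | case2 o _ a hp h _ ih =>
    intro x
    rw [SlowG_some h, ih x, (oeval_fs o x).1 a h]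
    omega
  | case3 o _ f hp h ih =>
    intro x
    rw [SlowG_lim h, ih x x, (oeval_fs o x).2 f h]

theorem oeval_opred_lt (x : ℕ) (o : ONote) : ∀ y : ℕ, x ≤ y → o ≠ 0 →
    oeval (opred x o) y < oeval o y := by
  induction o using opred.induct (x := x) with
  | case1 o _ hp h =>
    intro y hxy ho
    exact absurd hp ho
  | case2 o _ a hp h =>
    intro y hxy ho
    rw [opred_some h, (oeval_fs o y).1 a h]
    omega
  | case3 o _ f hp h _ ih =>
    intro y hxy ho
    rw [opred_lim h]
    by_cases hfx : f x = 0
    · rw [hfx, opred_none (o := (0 : ONote)) rfl]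
      exact oeval_pos o ho y
    · calc oeval (opred x (f x)) y < oeval (f x) y := ih y hxy hfx
        _ ≤ oeval (f y) y := oeval_fs_mono' o h hxy y
        _ = oeval o y := (oeval_fs o y).2 f h

/-- Let `h : ℕ → ℕ` be strictly increasing, `α < ε₀` and `n > 0`.  If
`⟨α₀,n₀⟩, …, ⟨α_ℓ,n_ℓ⟩` is a Hardy computation for `h^α(n)` (i.e. `α₀ = α`, `n₀ = n`,
`α_ℓ = 0` and, for `0 < i ≤ ℓ`, `α_i = P_(n_(i-1))(α_(i-1))` and `n_i = h(n_(i-1))`), then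
for all `0 ≤ i ≤ ℓ`, `|α_i| ≤ G_α(n_ℓ)`. -/
theorem hardy_computation_size_le (h : ℕ → ℕ) (hh : StrictMono h) (α : ONote) (hNF : α.NF)
    (n : ℕ) (hn : 0 < n) (ℓ : ℕ) (aseq : ℕ → ONote) (nseq : ℕ → ℕ)
    (h0 : aseq 0 = α) (hn0 : nseq 0 = n) (hl : aseq ℓ = 0)
    (hstep : ∀ i < ℓ, aseq (i + 1) = opred (nseq i) (aseq i) ∧ nseq (i + 1) = h (nseq i))
    (i : ℕ) (hi : i ≤ ℓ) :
    osize (aseq i) ≤ SlowG α (nseq ℓ) := by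
  have hmono : ∀ j, j ≤ ℓ → ∀ k, k ≤ j → nseq k ≤ nseq j := by
    intro j
    induction j with
    | zero => intro _ k hk; interval_cases k; exact le_rfl
    | succ j ihj =>
      intro hj k hk
      rcases Nat.lt_or_ge k (j + 1) with hk' | hk'
      · calc nseq k ≤ nseq j := ihj (by omega) k (by omega)
          _ ≤ h (nseq j) := hh.le_apply
          _ = nseq (j + 1) := ((hstep j (by omega)).2).symm
      · have : k = j + 1 := by omega
        subst this; exact le_refl _
  have hpos : ∀ j, j ≤ ℓ → 1 ≤ nseq j := fun j hj =>
    le_trans (by omega : 1 ≤ nseq 0) (hmono j hj 0 (Nat.zero_le _))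
  have claim : ∀ j, j ≤ ℓ → oeval (aseq j) (nseq ℓ) ≤ oeval α (nseq ℓ) := by
    intro j
    induction j with
    | zero => intro _; rw [h0]
    | succ j ihj =>
      intro hj
      have hjl : j < ℓ := by omega
      rw [(hstep j hjl).1]
      by_cases ha : aseq j = 0
      · rw [ha, opred_none (o := (0 : ONote)) rfl]
        exact Nat.zero_le _
      · have h1 : oeval (opred (nseq j) (aseq j)) (nseq ℓ) < oeval (aseq j) (nseq ℓ) :=
          oeval_opred_lt (nseq j) (aseq j) (nseq ℓ) (hmono ℓ le_rfl j (by omega)) ha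
        exact le_trans (le_of_lt h1) (ihj (by omega))
  calc osize (aseq i) ≤ oeval (aseq i) (nseq i) := osize_le_oeval _ (hpos i hi)
    _ ≤ oeval (aseq i) (nseq ℓ) := oeval_mono _ (hmono ℓ le_rfl i hi)
    _ ≤ oeval α (nseq ℓ) := claim i hi
    _ = SlowG α (nseq ℓ) := (slowG_eq_oeval α _).symm
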